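/- For i = 1, 2 let Gᵢ be a finite abelian group, let qᵢ : Gᵢ → ℚ/2ℤ be a quadratic form with associated symmetric bilinear form bᵢ : Gᵢ × Gᵢ → ℚ/ℤ, and let f : G₁ → G₂ be an isomorphism of abelian groups. Then the following are equivalent: (1) f preserves the quadratic forms, i.e., q₂(f(x)) = q₁(x) for all x ∈ G₁; (2) f preserves the bilinear forms, i.e., b₂(f(x), f(y)) = b₁(x, y) for all x, y ∈ G₁, and q₂(f(x)) = q₁(x) for all x in the Sylow 2-subgroup of G₁ (equivalently, for all x ∈ G₁ of 2-power order). -/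
import Mathlib


/-- For `i = 1,2` let `Gᵢ` be a finite abelian group carrying a quadratic form
`qᵢ : Gᵢ → ℚ/2ℤ` with associated symmetric bilinear form `bᵢ : Gᵢ × Gᵢ → ℚ/ℤ`
(so `qᵢ(n•x) = n²•qᵢ(x)` and `qᵢ(x+y) − qᵢ(x) − qᵢ(y) = 2bᵢ(x,y)`, where
`2·(-)` is the doubling map `ℚ/ℤ → ℚ/2ℤ`), and let `f : G₁ ≃ G₂` be an isomorphism of
abelian groups.  Then `f` preserves the quadratic forms iff `f` preserves the bilinear
forms and preserves the quadratic forms on all elements of `2`-power order (the Sylow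
`2`-subgroup). -/
theorem quadratic_form_iso_iff_isometry_and_two_part
    {G₁ G₂ : Type*} [AddCommGroup G₁] [AddCommGroup G₂] [Finite G₁] [Finite G₂]
    (q₁ : G₁ → AddCircle (2 : ℚ)) (b₁ : G₁ → G₁ → AddCircle (1 : ℚ))
    (q₂ : G₂ → AddCircle (2 : ℚ)) (b₂ : G₂ → G₂ → AddCircle (1 : ℚ))
    (hb₁symm : ∀ x y : G₁, b₁ x y = b₁ y x)
    (hb₂symm : ∀ x y : G₂, b₂ x y = b₂ y x)
    (hq₁smul : ∀ (n : ℤ) (x : G₁), q₁ (n • x) = n ^ 2 • q₁ x)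
    (hq₂smul : ∀ (n : ℤ) (x : G₂), q₂ (n • x) = n ^ 2 • q₂ x)
    (hq₁polar : ∀ x y : G₁, q₁ (x + y) - q₁ x - q₁ y =
      AddCircle.equivAddCircle (1 : ℚ) (2 : ℚ) one_ne_zero two_ne_zero (b₁ x y))
    (hq₂polar : ∀ x y : G₂, q₂ (x + y) - q₂ x - q₂ y =
      AddCircle.equivAddCircle (1 : ℚ) (2 : ℚ) one_ne_zero two_ne_zero (b₂ x y))
    (f : G₁ ≃+ G₂) :
    (∀ x : G₁, q₂ (f x) = q₁ x) ↔
      ((∀ x y : G₁, b₂ (f x) (f y) = b₁ x y) ∧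
        ∀ x : G₁, (∃ k : ℕ, 2 ^ k • x = 0) → q₂ (f x) = q₁ x) := by
  constructor
  · intro h
    refine ⟨fun x y => ?_, fun x _ => h x⟩
    apply (AddCircle.equivAddCircle (1 : ℚ) (2 : ℚ) one_ne_zero two_ne_zero).injective
    rw [← hq₂polar, ← hq₁polar, ← map_add f, h, h, h]
  · rintro ⟨hb, h2⟩ x
    set d : G₁ → AddCircle (2:ℚ) := fun a => q₂ (f a) - q₁ a with hd
    suffices hdx : d x = 0 by
      have := hdx
      simpa [hd, sub_eq_zero] using this
    have hadd : ∀ a b : G₁, d (a + b) = d a + d b := by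
      intro a b
      have h1 := hq₁polar a b
      have h2' := hq₂polar (f a) (f b)
      rw [← map_add f, hb a b, ← h1] at h2'
      have hA : q₂ (f (a + b)) = (q₁ (a + b) - q₁ a - q₁ b) + q₂ (f a) + q₂ (f b) := by
        rw [← h2']; abel
      simp only [hd]
      rw [hA]; abel
    have hq₁0 : q₁ (0 : G₁) = 0 := by simpa using hq₁smul 0 0
    have hq₂0 : q₂ (0 : G₂) = 0 := by simpa using hq₂smul 0 0
    have hzero : d 0 = 0 := by simp [hd, hq₁0, hq₂0]
    have hneg : ∀ a : G₁, d (-a) = d a := by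
      intro a
      have h1 : q₁ (-a) = q₁ a := by simpa using hq₁smul (-1) a
      have h2'' : q₂ (-(f a)) = q₂ (f a) := by simpa using hq₂smul (-1) (f a)
      simp [hd, h1, h2'']
    have htwo : ∀ a : G₁, d a + d a = 0 := by
      intro a
      have := hadd a (-a)
      rw [add_neg_cancel, hzero, hneg] at this
      exact this.symm
    have hnsmul : ∀ (n : ℕ) (a : G₁), d (n • a) = n • d a := by
      intro n a
      induction n with
      | zero => simpa using hzero
      | succ n ih => rw [succ_nsmul, hadd, ih, succ_nsmul]
    -- decompose x into 2-part and odd part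
    have hfin : IsOfFinAddOrder x := isOfFinAddOrder_of_finite x
    set n := addOrderOf x with hn
    have hnpos : 0 < n := hfin.addOrderOf_pos
    set k := n.factorization 2 with hk
    set m := n / 2 ^ k with hm
    have hnm : 2 ^ k * m = n := Nat.ordProj_mul_ordCompl_eq_self n 2
    have hcop : Nat.Coprime 2 m := Nat.coprime_ordCompl Nat.prime_two hnpos.ne'
    have hcop' : Nat.Coprime (2 ^ k) m := hcop.pow_left k
    have hbez : ∃ u v : ℤ, (2:ℤ) ^ k * u + (m:ℤ) * v = 1 := by
      refine ⟨Int.gcdA ((2:ℤ)^k) (m:ℤ), Int.gcdB ((2:ℤ)^k) (m:ℤ), ?_⟩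
      have hg : Int.gcd ((2:ℤ)^k) (m:ℤ) = 1 := by
        have hcast : (((2:ℕ)^k : ℕ) : ℤ) = (2:ℤ)^k := by push_cast; ring
        rw [← hcast, Int.gcd_natCast_natCast]
        exact hcop'
      have hb0 := Int.gcd_eq_gcd_ab ((2:ℤ)^k) (m:ℤ)
      rw [hg] at hb0
      exact_mod_cast hb0.symm
    obtain ⟨u, v, huv⟩ := hbez
    have hnx : (n : ℤ) • x = 0 := by
      rw [natCast_zsmul]
      exact addOrderOf_nsmul_eq_zero x
    have hx : x = ((2:ℤ) ^ k * u) • x + ((m:ℤ) * v) • x := by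
      rw [← add_smul, huv, one_smul]
    -- the 2-power part
    have hy : d (((m:ℤ) * v) • x) = 0 := by
      have h2pow : (2:ℕ) ^ k • (((m:ℤ) * v) • x) = 0 := by
        have heq : (2:ℕ) ^ k • (((m:ℤ) * v) • x) = v • ((n:ℤ) • x) := by
          rw [← natCast_zsmul, ← mul_smul, ← mul_smul]
          congr 1
          push_cast [← hnm]
          ring
        rw [heq, hnx, smul_zero]
      have hq := h2 (((m:ℤ) * v) • x) ⟨k, h2pow⟩
      simp only [hd]
      rw [hq, sub_self]
    -- the odd part
    have hz : d (((2:ℤ) ^ k * u) • x) = 0 := by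
      set z := ((2:ℤ) ^ k * u) • x with hzdef
      have hmz : (m:ℕ) • z = 0 := by
        have heq : (m:ℕ) • z = u • ((n:ℤ) • x) := by
          rw [hzdef, ← natCast_zsmul, ← mul_smul, ← mul_smul]
          congr 1
          push_cast [← hnm]
          ring
        rw [heq, hnx, smul_zero]
      have hmd : m • d z = 0 := by rw [← hnsmul, hmz, hzero]
      -- m is odd
      have hodd : ¬ (2 ∣ m) := (Nat.prime_two.coprime_iff_not_dvd).mp hcop
      obtain ⟨c, hc⟩ : ∃ c, m = 2 * c + 1 := ⟨m / 2, by omega⟩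
      have : m • d z = d z := by
        rw [hc, add_smul, one_smul, mul_comm, mul_smul]
        have : (2:ℕ) • d z = 0 := by rw [two_nsmul]; exact htwo z
        rw [this, smul_zero, zero_add]
      rw [this] at hmd
      exact hmd
    calc d x = d (((2:ℤ) ^ k * u) • x + ((m:ℤ) * v) • x) := by rw [← hx]
      _ = 0 := by rw [hadd, hy, hz, add_zero]
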